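/- If γ is a column and u, v are words with γu ≡_styl γv, then γ·u = γ·v (the right actions of u and v send γ to the same column). -/

import Mathlib

noncomputable section

open FreeMonoid

/-- The defining relations of the stylic congruence: the Knuth (plactic)
relations together with the idempotent relations `a² ≡ a`. -/
inductive StylicRel (A : Type*) [LinearOrder A] : FreeMonoid A → FreeMonoid A → Prop
  | knuth1 {a b c : A} : a < b → b < c →
      StylicRel A (ofList [b, a, c]) (ofList [b, c, a])
  | knuth2 {a b c : A} : a < b → b < c →
      StylicRel A (ofList [a, c, b]) (ofList [c, a, b])
  | knuth3 {a b : A} : a < b →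
      StylicRel A (ofList [b, a, b]) (ofList [b, b, a])
  | knuth4 {a b : A} : a < b →
      StylicRel A (ofList [a, b, a]) (ofList [b, a, a])
  | idem (a : A) : StylicRel A (ofList [a, a]) (ofList [a])

/-- The stylic congruence on the free monoid `A*`. -/
def stylCon (A : Type*) [LinearOrder A] : Con (FreeMonoid A) := conGen (StylicRel A)

/-- The stylic monoid `Styl(A)`. -/
abbrev Styl (A : Type*) [LinearOrder A] := (stylCon A).Quotient

/-- Right action of a letter `c` on a column `γ`: if `c < min γ` then
`γ ∪ {c}`; otherwise replace `max {x ∈ γ : x ≤ c}` (the bumped letter) by `c`. -/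
def rIns {A : Type*} [LinearOrder A] (γ : Finset A) (c : A) : Finset A :=
  if h : (γ.filter (· ≤ c)).Nonempty then
    insert c (γ.erase ((γ.filter (· ≤ c)).max' h))
  else insert c γ

/-- Schensted left column insertion of a letter `b` into a column `δ`:
if `b > max δ` then `δ ∪ {b}`; otherwise replace `min {x ∈ δ : x ≥ b}`
(the bumped letter) by `b`. -/
def lIns {A : Type*} [LinearOrder A] (b : A) (δ : Finset A) : Finset A :=
  if h : (δ.filter (b ≤ ·)).Nonempty then
    insert b (δ.erase ((δ.filter (b ≤ ·)).min' h))
  else insert b δ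

/-- The right action of a word on a column, `γ·(uv) = (γ·u)·v`. -/
def rActW {A : Type*} [LinearOrder A] (γ : Finset A) (w : List A) : Finset A :=
  w.foldl rIns γ

/-- The left action of a word on a column, `(uv)·γ = u·(v·γ)`. -/
def lActW {A : Type*} [LinearOrder A] (w : List A) (γ : Finset A) : Finset A :=
  w.foldr lIns γ

/-- The strictly decreasing word of a column `γ ⊆ A`. -/
def decWord {A : Type*} [LinearOrder A] (γ : Finset A) : List A :=
  (γ.sort (· ≤ ·)).reverse

section Helpers

variable {A : Type*} [LinearOrder A]

lemma self_mem_rIns (γ : Finset A) (c : A) : c ∈ rIns γ c := by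
  rw [rIns]; split_ifs <;> exact Finset.mem_insert_self _ _

lemma rIns_subset (γ : Finset A) (c : A) : rIns γ c ⊆ insert c γ := by
  rw [rIns]; split_ifs
  · exact Finset.insert_subset_insert _ (Finset.erase_subset _ _)
  · exact subset_rfl

lemma exists_bump {γ : Finset A} {c : A} (h : ∃ x ∈ γ, x ≤ c) :
    ∃ m, m ∈ γ ∧ m ≤ c ∧ ∀ x ∈ γ, x ≤ c → x ≤ m := by
  obtain ⟨x0, hx0, hx0c⟩ := h
  have hne : (γ.filter (· ≤ c)).Nonempty := ⟨x0, Finset.mem_filter.mpr ⟨hx0, hx0c⟩⟩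
  have hmem := Finset.max'_mem _ hne
  obtain ⟨h1, h2⟩ := Finset.mem_filter.mp hmem
  refine ⟨_, h1, h2, fun x hx hxc => Finset.le_max' _ x ?_⟩
  exact Finset.mem_filter.mpr ⟨hx, hxc⟩

/-- Compute `rIns` when the bumped element `m` is known. -/
lemma rIns_eq_of {γ : Finset A} {c m : A} (hm : m ∈ γ) (hmc : m ≤ c)
    (hmax : ∀ x ∈ γ, x ≤ c → x ≤ m) : rIns γ c = insert c (γ.erase m) := by
  have hmf : m ∈ γ.filter (· ≤ c) := Finset.mem_filter.mpr ⟨hm, hmc⟩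
  have hne : (γ.filter (· ≤ c)).Nonempty := ⟨m, hmf⟩
  have hval : (γ.filter (· ≤ c)).max' hne = m := by
    refine le_antisymm (Finset.max'_le _ hne _ ?_) (Finset.le_max' _ _ hmf)
    intro x hx
    obtain ⟨hxγ, hxc⟩ := Finset.mem_filter.mp hx
    exact hmax x hxγ hxc
  rw [rIns, dif_pos hne, hval]

lemma rIns_eq_of_empty {γ : Finset A} {c : A} (h : ∀ x ∈ γ, ¬ x ≤ c) :
    rIns γ c = insert c γ := by
  have hne : ¬ (γ.filter (· ≤ c)).Nonempty := by
    rintro ⟨x, hx⟩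
    obtain ⟨hxγ, hxc⟩ := Finset.mem_filter.mp hx
    exact h x hxγ hxc
  rw [rIns, dif_neg hne]

lemma rIns_of_mem {γ : Finset A} {a : A} (ha : a ∈ γ) : rIns γ a = γ := by
  rw [rIns_eq_of ha le_rfl (fun x _ hx => hx), Finset.insert_erase ha]

lemma mem_rIns_of_lt {γ : Finset A} {x c : A} (hx : x ∈ γ) (h : c < x) : x ∈ rIns γ c := by
  rw [rIns]; split_ifs with hne
  · refine Finset.mem_insert_of_mem (Finset.mem_erase.mpr ⟨?_, hx⟩)
    intro heq
    have hmem := Finset.max'_mem _ hne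
    rw [← heq] at hmem
    exact absurd (Finset.mem_filter.mp hmem).2 (not_le.mpr h)
  · exact Finset.mem_insert_of_mem hx

/-- Commutation of two insertions separated by a witness `b ∈ γ`, `a < b ≤ c`. -/
lemma rIns_comm {γ : Finset A} {a b c : A} (hb : b ∈ γ) (hab : a < b) (hbc : b ≤ c) :
    rIns (rIns γ a) c = rIns (rIns γ c) a := by
  obtain ⟨M, hMγ, hMc, hMmax⟩ := exists_bump ⟨b, hb, hbc⟩
  have haM : a < M := lt_of_lt_of_le hab (hMmax b hb hbc)
  have hac : a < c := lt_of_lt_of_le haM hMc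
  have hγc : rIns γ c = insert c (γ.erase M) := rIns_eq_of hMγ hMc hMmax
  by_cases hFa : ∃ x ∈ γ, x ≤ a
  · obtain ⟨m, hmγ, hma, hmmax⟩ := exists_bump hFa
    have hmM : m < M := lt_of_le_of_lt hma haM
    have hγa : rIns γ a = insert a (γ.erase m) := rIns_eq_of hmγ hma hmmax
    have hL : rIns (insert a (γ.erase m)) c =
        insert c ((insert a (γ.erase m)).erase M) := by
      refine rIns_eq_of ?_ hMc ?_
      · exact Finset.mem_insert_of_mem (Finset.mem_erase.mpr ⟨hmM.ne', hMγ⟩)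
      · intro x hx hxc
        rcases Finset.mem_insert.mp hx with rfl | hx'
        · exact haM.le
        · exact hMmax x (Finset.mem_of_mem_erase hx') hxc
    have hR : rIns (insert c (γ.erase M)) a =
        insert a ((insert c (γ.erase M)).erase m) := by
      refine rIns_eq_of ?_ hma ?_
      · exact Finset.mem_insert_of_mem (Finset.mem_erase.mpr ⟨hmM.ne, hmγ⟩)
      · intro x hx hxa
        rcases Finset.mem_insert.mp hx with rfl | hx'
        · exact absurd hxa (not_le.mpr hac)
        · exact hmmax x (Finset.mem_of_mem_erase hx') hxa
    rw [hγa, hγc, hL, hR,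
      Finset.erase_insert_of_ne haM.ne, Finset.erase_insert_of_ne (hmM.trans_le hMc).ne',
      Finset.insert_comm, Finset.erase_right_comm]
  · push_neg at hFa
    have hγa : rIns γ a = insert a γ := rIns_eq_of_empty (fun x hx => not_le.mpr (hFa x hx))
    have hL : rIns (insert a γ) c = insert c ((insert a γ).erase M) := by
      refine rIns_eq_of (Finset.mem_insert_of_mem hMγ) hMc ?_
      intro x hx hxc
      rcases Finset.mem_insert.mp hx with rfl | hx'
      · exact haM.le
      · exact hMmax x hx' hxc
    have hR : rIns (insert c (γ.erase M)) a = insert a (insert c (γ.erase M)) := by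
      refine rIns_eq_of_empty ?_
      intro x hx
      rcases Finset.mem_insert.mp hx with rfl | hx'
      · exact not_le.mpr hac
      · exact not_le.mpr (hFa x (Finset.mem_of_mem_erase hx'))
    rw [hγa, hγc, hL, hR, Finset.erase_insert_of_ne haM.ne, Finset.insert_comm]

/-- Absorption: if no element of `γ` lies in `(a, b]` then inserting `a` then `b`
is the same as inserting `b` alone. -/
lemma rIns_absorb {γ : Finset A} {a b : A} (hab : a < b)
    (h : ∀ y ∈ γ, a < y → b < y) : rIns (rIns γ a) b = rIns γ b := by
  have hbound : ∀ x ∈ γ, x ≤ b → x ≤ a := by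
    intro x hx hxb
    by_contra hxa
    exact absurd hxb (not_le.mpr (h x hx (not_le.mp hxa)))
  by_cases hFa : ∃ x ∈ γ, x ≤ a
  · obtain ⟨m, hmγ, hma, hmmax⟩ := exists_bump hFa
    have hγa : rIns γ a = insert a (γ.erase m) := rIns_eq_of hmγ hma hmmax
    have hL : rIns (insert a (γ.erase m)) b =
        insert b ((insert a (γ.erase m)).erase a) := by
      refine rIns_eq_of (Finset.mem_insert_self _ _) hab.le ?_
      intro x hx hxb
      rcases Finset.mem_insert.mp hx with rfl | hx'
      · exact le_rfl
      · exact hbound x (Finset.mem_of_mem_erase hx') hxb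
    have hR : rIns γ b = insert b (γ.erase m) :=
      rIns_eq_of hmγ (hma.trans hab.le) (fun x hx hxb => hmmax x hx (hbound x hx hxb))
    have hnotmem : a ∉ γ.erase m := by
      intro hmem
      obtain ⟨hne, haγ⟩ := Finset.mem_erase.mp hmem
      exact hne (le_antisymm hma (hmmax a haγ le_rfl)).symm
    rw [hγa, hL, hR, Finset.erase_insert_eq_erase, Finset.erase_eq_of_notMem hnotmem]
  · push_neg at hFa
    have haγ : a ∉ γ := fun hmem => absurd le_rfl (not_le.mpr (hFa a hmem))
    have hγa : rIns γ a = insert a γ := rIns_eq_of_empty (fun x hx => not_le.mpr (hFa x hx))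
    have hbγ : ∀ x ∈ γ, ¬ x ≤ b := fun x hx hxb => absurd (hbound x hx hxb) (not_le.mpr (hFa x hx))
    have hL : rIns (insert a γ) b = insert b ((insert a γ).erase a) := by
      refine rIns_eq_of (Finset.mem_insert_self _ _) hab.le ?_
      intro x hx hxb
      rcases Finset.mem_insert.mp hx with rfl | hx'
      · exact le_rfl
      · exact absurd hxb (hbγ x hx')
    rw [hγa, hL, Finset.erase_insert haγ, rIns_eq_of_empty hbγ]

end Helpers

section Main

variable {A : Type*} [LinearOrder A]

set_option maxHeartbeats 2000000 in
lemma rel_check {w w' : FreeMonoid A} (h : StylicRel A w w') (γ : Finset A) :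
    rActW γ (FreeMonoid.toList w) = rActW γ (FreeMonoid.toList w') := by
  cases h with
  | @knuth1 a b c hab hbc =>
      rw [FreeMonoid.toList_ofList, FreeMonoid.toList_ofList]
      simp only [rActW, List.foldl_cons, List.foldl_nil]
      show rIns (rIns (rIns γ b) a) c = rIns (rIns (rIns γ b) c) a
      exact rIns_comm (self_mem_rIns γ b) hab hbc.le
  | @knuth2 a b c hab hbc =>
      rw [FreeMonoid.toList_ofList, FreeMonoid.toList_ofList]
      simp only [rActW, List.foldl_cons, List.foldl_nil]
      show rIns (rIns (rIns γ a) c) b = rIns (rIns (rIns γ c) a) b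
      by_cases hex : ∃ y ∈ γ, a < y ∧ y ≤ c
      · obtain ⟨y, hy, h1, h2⟩ := hex
        rw [rIns_comm hy h1 h2]
      · push_neg at hex
        have h1 : ∀ y ∈ γ, a < y → c < y := hex
        have h2 : ∀ y ∈ rIns γ c, a < y → b < y := by
          intro y hy hay
          rcases Finset.mem_insert.mp (rIns_subset γ c hy) with rfl | hy'
          · exact hbc
          · exact hbc.trans (h1 y hy' hay)
        rw [rIns_absorb (hab.trans hbc) h1, rIns_absorb hab h2]
  | @knuth3 a b hab =>
      rw [FreeMonoid.toList_ofList, FreeMonoid.toList_ofList]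
      simp only [rActW, List.foldl_cons, List.foldl_nil]
      show rIns (rIns (rIns γ b) a) b = rIns (rIns (rIns γ b) b) a
      rw [rIns_of_mem (self_mem_rIns γ b),
        rIns_of_mem (mem_rIns_of_lt (self_mem_rIns γ b) hab)]
  | @knuth4 a b hab =>
      rw [FreeMonoid.toList_ofList, FreeMonoid.toList_ofList]
      simp only [rActW, List.foldl_cons, List.foldl_nil]
      show rIns (rIns (rIns γ a) b) a = rIns (rIns (rIns γ b) a) a
      rw [rIns_of_mem (self_mem_rIns (rIns γ b) a)]
      by_cases hex : ∃ y ∈ γ, a < y ∧ y ≤ b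
      · obtain ⟨y, hy, h1, h2⟩ := hex
        rw [rIns_comm hy h1 h2, rIns_of_mem (self_mem_rIns (rIns γ b) a)]
      · push_neg at hex
        rw [rIns_absorb hab hex]
  | idem a =>
      rw [FreeMonoid.toList_ofList, FreeMonoid.toList_ofList]
      simp only [rActW, List.foldl_cons, List.foldl_nil]
      show rIns (rIns γ a) a = rIns γ a
      exact rIns_of_mem (self_mem_rIns γ a)

lemma congen_invariant {w w' : FreeMonoid A}
    (h : ConGen.Rel (StylicRel A) w w') (γ : Finset A) :
    rActW γ (FreeMonoid.toList w) = rActW γ (FreeMonoid.toList w') := by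
  induction h generalizing γ with
  | of x y hxy => exact rel_check hxy γ
  | refl x => rfl
  | symm _ ih => exact (ih γ).symm
  | trans _ _ ih1 ih2 => exact (ih1 γ).trans (ih2 γ)
  | mul _ _ ih1 ih2 =>
      rename_i w₁ w₂ x₁ x₂ _ _
      show rActW γ (FreeMonoid.toList (w₁ * x₁)) = rActW γ (FreeMonoid.toList (w₂ * x₂))
      rw [FreeMonoid.toList_mul, FreeMonoid.toList_mul]
      show List.foldl rIns γ (_ ++ _) = List.foldl rIns γ (_ ++ _)
      rw [List.foldl_append, List.foldl_append]
      rw [show List.foldl rIns γ (FreeMonoid.toList w₁)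
            = List.foldl rIns γ (FreeMonoid.toList w₂) from ih1 γ]
      exact ih2 _

lemma foldr_sorted (l : List A) (hl : l.Pairwise (· < ·)) :
    List.foldr (fun x s => rIns s x) ∅ l = l.toFinset := by
  induction l with
  | nil => rfl
  | cons x t ih =>
      have hx : ∀ y ∈ t, x < y := fun y hy => (List.pairwise_cons.mp hl).1 y hy
      have ht := ih (List.pairwise_cons.mp hl).2
      show rIns (List.foldr (fun x s => rIns s x) ∅ t) x = _
      rw [ht, List.toFinset_cons]
      refine rIns_eq_of_empty ?_
      intro y hy
      exact not_le.mpr (hx y (List.mem_toFinset.mp hy))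

lemma rActW_decWord (γ : Finset A) : rActW ∅ (decWord γ) = γ := by
  unfold rActW decWord
  rw [List.foldl_reverse, foldr_sorted _ (List.sortedLT_iff_pairwise.mp (Finset.sortedLT_sort γ))]
  exact Finset.sort_toFinset (s := γ) _

end Main

/-- Lemma `gammau`: if `γu ≡_styl γv` then the right
actions of `u` and `v` send `γ` to the same column. -/
theorem congr_implies_same_right_action {A : Type*} [LinearOrder A]
    (γ : Finset A) (u v : List A)
    (h : stylCon A (ofList (decWord γ ++ u)) (ofList (decWord γ ++ v))) :
    rActW γ u = rActW γ v := by
  have h' : ConGen.Rel (StylicRel A) (ofList (decWord γ ++ u)) (ofList (decWord γ ++ v)) := h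
  have key := congen_invariant h' (∅ : Finset A)
  rw [FreeMonoid.toList_ofList, FreeMonoid.toList_ofList] at key
  unfold rActW at key ⊢
  rw [List.foldl_append, List.foldl_append] at key
  have hd : List.foldl rIns ∅ (decWord γ) = γ := rActW_decWord γ
  rw [hd] at key
  exact key
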